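/- Let φ(z) = (z² − 3)/(2z), extended to ℙ¹(ℚ) = ℚ ∪ {∞} by φ(0) = ∞ and φ(∞) = ∞. Then the set of rational preperiodic points of φ is exactly {0, ∞, 1, −1, 3, −3}, with orbit structure: ∞ is a fixed point, φ(0) = ∞, {1, −1} is a cycle of length 2 (φ(1) = −1 and φ(−1) = 1), φ(3) = 1, and φ(−3) = −1. In particular φ has exactly six rational preperiodic points. -/

import Mathlib

/-!
The rational preperiodic points of `φ(z) = (z² − 3)/(2z)` are exactly
`{0, ∞, 1, −1, 3, −3}`, with `∞` fixed, `φ(0) = ∞`, `{1, −1}` a 2-cycle,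
`φ(3) = 1`, `φ(−3) = −1`: six rational preperiodic points.

We model ℙ¹(ℚ) as `Option ℚ`, with `none` playing the role of ∞;
`φ(0) = ∞` and `φ(∞) = ∞`.
-/

/-- The map `φ(z) = (z² − 3)/(2z)` on `ℙ¹(ℚ)`, with `φ(0) = ∞` and
`φ(∞) = ∞`. -/
def phi16 : Option ℚ → Option ℚ
  | none => none
  | some x => if x = 0 then none else some ((x ^ 2 - 3) / (2 * x))

/-- A point is preperiodic for a self-map `f` if two distinct iterates of `f`
agree on it, i.e. its forward orbit is finite. -/
def IsPreperiodicPt {X : Type*} (f : X → X) (α : X) : Prop :=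
  ∃ i j : ℕ, i < j ∧ f^[i] α = f^[j] α


/-- 3 is not a rational square. -/
lemma sq_ne_three (x : ℚ) : x ^ 2 ≠ 3 := by
  intro h
  have h3 : IsSquare ((3 : ℕ) : ℚ) := ⟨x, by push_cast [← h]; ring⟩
  rw [Rat.isSquare_natCast_iff] at h3
  obtain ⟨r, hr⟩ := h3
  have h1 : 1 < r := by nlinarith
  have h2 : r < 2 := by nlinarith
  omega

/-- The affine part of the map. -/
def gmap (z : ℚ) : ℚ := (z ^ 2 - 3) / (2 * z)

lemma gmap_ne_zero {z : ℚ} (hz : z ≠ 0) : gmap z ≠ 0 := by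
  unfold gmap
  intro h
  rcases div_eq_zero_iff.mp h with h' | h'
  · exact sq_ne_three z (by linarith [sub_eq_zero.mp h'])
  · exact hz (by simpa using h')

lemma phi16_some {z : ℚ} (hz : z ≠ 0) : phi16 (some z) = some (gmap z) := by
  simp [phi16, hz, gmap]

lemma phi16_iter (x : ℚ) (hx : x ≠ 0) :
    ∀ n, phi16^[n] (some x) = some (gmap^[n] x) ∧ gmap^[n] x ≠ 0 := by
  intro n
  induction n with
  | zero => exact ⟨rfl, hx⟩
  | succ k ih =>
      rw [Function.iterate_succ_apply', Function.iterate_succ_apply', ih.1,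
        phi16_some ih.2]
      exact ⟨rfl, gmap_ne_zero ih.2⟩

noncomputable def Wmap (y : ℚ) : ℂ :=
  ((y : ℂ) + Real.sqrt 3 * Complex.I) / ((y : ℂ) - Real.sqrt 3 * Complex.I)

lemma sqrt3I_sq : ((Real.sqrt 3 : ℝ) * Complex.I) ^ 2 = -3 := by
  rw [mul_pow, Complex.I_sq]
  norm_cast
  rw [Real.sq_sqrt] <;> norm_num

lemma Wden_ne (y : ℚ) : (y : ℂ) - Real.sqrt 3 * Complex.I ≠ 0 := by
  intro h
  have h2 := congrArg Complex.im h
  simp [Complex.sub_im] at h2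

lemma Wnum_ne (y : ℚ) : (y : ℂ) + Real.sqrt 3 * Complex.I ≠ 0 := by
  intro h
  have h2 := congrArg Complex.im h
  simp [Complex.add_im] at h2

lemma Wmap_ne_zero (y : ℚ) : Wmap y ≠ 0 :=
  div_ne_zero (Wnum_ne y) (Wden_ne y)

lemma Wmap_sq {y : ℚ} (hy : y ≠ 0) : Wmap (gmap y) = (Wmap y) ^ 2 := by
  unfold Wmap
  set J : ℂ := (Real.sqrt 3 : ℝ) * Complex.I with hJdef
  have hJ : J ^ 2 = -3 := sqrt3I_sq
  have hgc : ((gmap y : ℚ) : ℂ) = ((y : ℂ) ^ 2 - 3) / (2 * (y : ℂ)) := by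
    unfold gmap; push_cast; ring
  have hY : (y : ℂ) ≠ 0 := by exact_mod_cast hy
  have hd1 : ((gmap y : ℚ) : ℂ) - J ≠ 0 := Wden_ne (gmap y)
  have hd2 : (y : ℂ) - J ≠ 0 := Wden_ne y
  rw [div_pow, div_eq_div_iff hd1 (pow_ne_zero 2 hd2), hgc]
  field_simp
  ring_nf
  linear_combination (4 * (y:ℂ) * J) * hJ

/-- the rational trace t(x) = 2(x²−3)/(x²+3) -/
def tr (x : ℚ) : ℚ := (2 * x ^ 2 - 6) / (x ^ 2 + 3)

lemma tr_eq (x : ℚ) : (tr x : ℂ) = Wmap x + (Wmap x)⁻¹ := by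
  unfold tr Wmap
  have hJ : ((Real.sqrt 3 : ℝ) * Complex.I) ^ 2 = -3 := sqrt3I_sq
  have hd1 : (x : ℂ) - (Real.sqrt 3 : ℝ) * Complex.I ≠ 0 := Wden_ne x
  have hd2 : (x : ℂ) + (Real.sqrt 3 : ℝ) * Complex.I ≠ 0 := Wnum_ne x
  have hx3 : ((x:ℚ)^2 + 3 : ℚ) ≠ 0 := by positivity
  have hx3' : ((x:ℂ))^2 + 3 ≠ 0 := by exact_mod_cast hx3
  rw [inv_div]
  push_cast
  field_simp
  ring_nf
  linear_combination (-4*(x:ℂ)^2) * hJ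

/-- w² = t·w − 1 -/
lemma Wmap_quad (x : ℚ) : (Wmap x) ^ 2 = (tr x : ℂ) * Wmap x - 1 := by
  have h := tr_eq x
  have hw := Wmap_ne_zero x
  field_simp [h]
  linear_combination (-Wmap x) * h - mul_inv_cancel₀ hw

lemma Wmap_inv_quad (x : ℚ) : ((Wmap x)⁻¹) ^ 2 = (tr x : ℂ) * (Wmap x)⁻¹ - 1 := by
  have h := tr_eq x
  have hw := Wmap_ne_zero x
  field_simp [h]
  linear_combination (-Wmap x) * h - mul_inv_cancel₀ hw

/-- Chebyshev-like trace sequence. -/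
def aseq (t : ℚ) : ℕ → ℚ
  | 0 => 2
  | 1 => t
  | (k + 2) => t * aseq t (k + 1) - aseq t k

lemma aseq_eq (x : ℚ) : ∀ k : ℕ, ((aseq (tr x) k : ℚ) : ℂ) = (Wmap x) ^ k + ((Wmap x)⁻¹) ^ k := by
  intro k
  induction k using Nat.twoStepInduction with
  | zero => norm_num [aseq]
  | one =>
      simp only [aseq, pow_one]
      exact tr_eq x
  | more k ih1 ih2 =>
      have hq := Wmap_quad x
      have hq' := Wmap_inv_quad x
      show ((tr x * aseq (tr x) (k+1) - aseq (tr x) k : ℚ) : ℂ) = _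
      push_cast [ih1, ih2]
      have e1 : (Wmap x) ^ (k+2) = (tr x : ℂ) * (Wmap x)^(k+1) - (Wmap x)^k := by
        have : (Wmap x) ^ (k+2) = (Wmap x)^k * (Wmap x)^2 := by ring
        rw [this, hq]; ring
      have e2 : ((Wmap x)⁻¹) ^ (k+2) = (tr x : ℂ) * ((Wmap x)⁻¹)^(k+1) - ((Wmap x)⁻¹)^k := by
        have : ((Wmap x)⁻¹) ^ (k+2) = ((Wmap x)⁻¹)^k * ((Wmap x)⁻¹)^2 := by ring
        rw [this, hq']; ring
      rw [e1, e2]; ring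

def Aseq (c q : ℤ) : ℕ → ℤ
  | 0 => 2
  | 1 => c
  | (k + 2) => c * Aseq c q (k + 1) - q ^ 2 * Aseq c q k

lemma Aseq_eq (t : ℚ) :
    ∀ k, ((Aseq t.num t.den k : ℤ) : ℚ) = aseq t k * (t.den : ℚ) ^ k := by
  have hc : ((t.num : ℤ) : ℚ) = t * (t.den : ℚ) := by
    have hd : ((t.den : ℚ)) ≠ 0 := by exact_mod_cast t.den_nz
    exact (div_eq_iff hd).mp (Rat.num_div_den t)
  intro k
  induction k using Nat.twoStepInduction with
  | zero => norm_num [Aseq, aseq]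
  | one =>
      show ((t.num : ℤ) : ℚ) = aseq t 1 * (t.den : ℚ) ^ 1
      rw [hc]; simp [aseq]
  | more k ih1 ih2 =>
      show ((t.num * Aseq t.num t.den (k+1) - (t.den:ℤ)^2 * Aseq t.num t.den k : ℤ) : ℚ)
          = (t * aseq t (k+1) - aseq t k) * (t.den : ℚ) ^ (k+2)
      push_cast [ih1, ih2]
      push_cast at hc
      linear_combination (aseq t (k+1) * (t.den : ℚ) ^ (k+1)) * hc

lemma Aseq_coprime (t : ℚ) : ∀ k, IsCoprime (Aseq t.num t.den (k + 1)) (t.den : ℤ) := by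
  have h1 : IsCoprime t.num (t.den : ℤ) := by
    rw [Int.isCoprime_iff_gcd_eq_one]
    exact t.reduced
  intro k
  induction k using Nat.twoStepInduction with
  | zero => exact h1
  | one =>
      show IsCoprime (t.num * Aseq t.num t.den 1 - (t.den:ℤ)^2 * Aseq t.num t.den 0) _
      have : t.num * Aseq t.num t.den 1 - (t.den:ℤ)^2 * Aseq t.num t.den 0
          = t.num * Aseq t.num t.den 1 + (-((t.den:ℤ) * Aseq t.num t.den 0)) * (t.den:ℤ) := by
        ring
      rw [this]
      exact (h1.mul_left h1).add_mul_right_left _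
  | more k ih1 ih2 =>
      show IsCoprime (t.num * Aseq t.num t.den (k+2) - (t.den:ℤ)^2 * Aseq t.num t.den (k+1)) _
      have : t.num * Aseq t.num t.den (k+2) - (t.den:ℤ)^2 * Aseq t.num t.den (k+1)
          = t.num * Aseq t.num t.den (k+2) + (-((t.den:ℤ) * Aseq t.num t.den (k+1))) * (t.den:ℤ) := by
        ring
      rw [this]
      exact (h1.mul_left ih2).add_mul_right_left _

/-- If the trace sequence attains value 2 at a positive index, the trace is an integer. -/
lemma tr_den_one (t : ℚ) (m : ℕ) (hm : 1 ≤ m) (h2 : aseq t m = 2) : t.den = 1 := by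
  have hA : (Aseq t.num t.den m : ℚ) = 2 * (t.den : ℚ) ^ m := by
    rw [Aseq_eq t m, h2]
  have hAz : Aseq t.num t.den m = 2 * (t.den : ℤ) ^ m := by exact_mod_cast hA
  obtain ⟨k, rfl⟩ : ∃ k, m = k + 1 := ⟨m - 1, by omega⟩
  have hcop := Aseq_coprime t k
  rw [hAz] at hcop
  have hdvd : (t.den : ℤ) ∣ 2 * (t.den : ℤ) ^ (k + 1) :=
    Dvd.dvd.mul_left (dvd_pow_self _ (Nat.succ_ne_zero k)) 2
  have hunit : IsUnit ((t.den : ℤ)) := hcop.isUnit_of_dvd' hdvd dvd_rfl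
  rcases Int.isUnit_iff.mp hunit with h | h
  · exact_mod_cast h
  · omega

lemma Wmap_iter (x : ℚ) (hx : x ≠ 0) :
    ∀ n, Wmap (gmap^[n] x) = (Wmap x) ^ (2 ^ n) := by
  intro n
  induction n with
  | zero => simp
  | succ k ih =>
      rw [Function.iterate_succ_apply', Wmap_sq ((phi16_iter x hx k).2), ih,
        ← pow_mul, pow_succ]

lemma preperiodic_rat (x : ℚ) (hx : x ≠ 0) (h : IsPreperiodicPt phi16 (some x)) :
    x = 1 ∨ x = -1 ∨ x = 3 ∨ x = -3 := by
  obtain ⟨i, j, hij, heq⟩ := h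
  rw [(phi16_iter x hx i).1, (phi16_iter x hx j).1] at heq
  have hg : gmap^[i] x = gmap^[j] x := Option.some.inj heq
  set w : ℂ := Wmap x with hw
  have hwne : w ≠ 0 := Wmap_ne_zero x
  have hpow : w ^ (2 ^ i) = w ^ (2 ^ j) := by
    rw [← Wmap_iter x hx i, ← Wmap_iter x hx j, hg]
  -- extract a root of unity
  have hlt : 2 ^ i < 2 ^ j := Nat.pow_lt_pow_right (by norm_num) hij
  set m : ℕ := 2 ^ j - 2 ^ i with hm
  have hm1 : 1 ≤ m := by omega
  have hsplit : (2 : ℕ) ^ j = 2 ^ i + m := by omega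
  have hwm : w ^ m = 1 := by
    have : w ^ (2 ^ i) * w ^ m = w ^ (2 ^ i) * 1 := by
      rw [mul_one, ← pow_add, ← hsplit, hpow]
    exact mul_left_cancel₀ (pow_ne_zero _ hwne) this
  -- hence the trace sequence attains 2 at index m
  have ham : aseq (tr x) m = 2 := by
    have hc : ((aseq (tr x) m : ℚ) : ℂ) = ((2 : ℚ) : ℂ) := by
      rw [aseq_eq x m, ← hw, hwm, inv_pow, hwm]
      norm_num
    exact_mod_cast hc
  have hden : (tr x).den = 1 := tr_den_one (tr x) m hm1 ham
  have hnum : ((tr x).num : ℚ) = tr x := (Rat.den_eq_one_iff _).mp hden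
  -- bounds: -2 < tr x < 2
  have hx3 : (0 : ℚ) < x ^ 2 + 3 := by positivity
  have htlt : tr x < 2 := by
    rw [tr, div_lt_iff₀ hx3]; nlinarith
  have htgt : -2 < tr x := by
    rw [tr, lt_div_iff₀ hx3]
    have : x ^ 2 > 0 := by positivity
    nlinarith
  have hn1 : ((tr x).num : ℚ) < 2 := by rw [hnum]; exact htlt
  have hn2 : (-2 : ℚ) < ((tr x).num : ℚ) := by rw [hnum]; exact htgt
  have hb1 : (tr x).num < 2 := by exact_mod_cast hn1
  have hb2 : -2 < (tr x).num := by exact_mod_cast hn2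
  -- the defining equation: 2x² − 6 = n(x² + 3)
  have hxeq : 2 * x ^ 2 - 6 = ((tr x).num : ℚ) * (x ^ 2 + 3) := by
    rw [hnum, tr, div_mul_cancel₀ _ (ne_of_gt hx3)]
  interval_cases h : (tr x).num
  · -- n = -1 : x² = 1
    push_cast at hxeq
    have : (x - 1) * (x + 1) = 0 := by nlinarith
    rcases mul_eq_zero.mp this with h' | h'
    · left; linarith [sub_eq_zero.mp h']
    · right; left; linarith [add_eq_zero_iff_eq_neg.mp h']
  · -- n = 0 : x² = 3, impossible
    push_cast at hxeq
    exact absurd (by linarith : x ^ 2 = 3) (sq_ne_three x)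
  · -- n = 1 : x² = 9
    push_cast at hxeq
    have : (x - 3) * (x + 3) = 0 := by nlinarith
    rcases mul_eq_zero.mp this with h' | h'
    · right; right; left; linarith [sub_eq_zero.mp h']
    · right; right; right; linarith [add_eq_zero_iff_eq_neg.mp h']


/-- The set of rational preperiodic points of `φ(z) = (z² − 3)/(2z)` is
exactly `{0, ∞, 1, −1, 3, −3}` (six points), with `∞` fixed, `φ(0) = ∞`,
`φ(1) = −1`, `φ(−1) = 1`, `φ(3) = 1`, and `φ(−3) = −1`. -/
theorem phi16_preperiodic_points :
    {α : Option ℚ | IsPreperiodicPt phi16 α} =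
        ({some 0, none, some 1, some (-1), some 3, some (-3)} :
          Set (Option ℚ)) ∧
      {α : Option ℚ | IsPreperiodicPt phi16 α}.ncard = 6 ∧
      phi16 none = none ∧ phi16 (some 0) = none ∧
      phi16 (some 1) = some (-1) ∧ phi16 (some (-1)) = some 1 ∧
      phi16 (some 3) = some 1 ∧ phi16 (some (-3)) = some (-1) := by
  have hvn : phi16 none = none := rfl
  have hv0 : phi16 (some 0) = none := by norm_num [phi16]
  have hv1 : phi16 (some 1) = some (-1) := by norm_num [phi16]
  have hvm1 : phi16 (some (-1)) = some 1 := by norm_num [phi16]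
  have hv3 : phi16 (some 3) = some 1 := by norm_num [phi16]
  have hvm3 : phi16 (some (-3)) = some (-1) := by norm_num [phi16]
  have i0 : ∀ a, phi16^[0] a = a := fun _ => rfl
  have i1 : ∀ a, phi16^[1] a = phi16 a := fun _ => rfl
  have i2 : ∀ a, phi16^[2] a = phi16 (phi16 a) := fun _ => rfl
  have i3 : ∀ a, phi16^[3] a = phi16 (phi16 (phi16 a)) := fun _ => rfl
  have pn : IsPreperiodicPt phi16 none := ⟨0, 1, one_pos, by rw [i0, i1, hvn]⟩
  have p0 : IsPreperiodicPt phi16 (some 0) :=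
    ⟨1, 2, one_lt_two, by rw [i1, i2, hv0, hvn]⟩
  have p1 : IsPreperiodicPt phi16 (some 1) :=
    ⟨0, 2, by norm_num, by rw [i0, i2, hv1, hvm1]⟩
  have pm1 : IsPreperiodicPt phi16 (some (-1)) :=
    ⟨0, 2, by norm_num, by rw [i0, i2, hvm1, hv1]⟩
  have p3 : IsPreperiodicPt phi16 (some 3) :=
    ⟨1, 3, by norm_num, by rw [i1, i3, hv3, hv1, hvm1]⟩
  have pm3 : IsPreperiodicPt phi16 (some (-3)) :=
    ⟨1, 3, by norm_num, by rw [i1, i3, hvm3, hvm1, hv1]⟩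
  have hset : {α : Option ℚ | IsPreperiodicPt phi16 α} =
      ({some 0, none, some 1, some (-1), some 3, some (-3)} : Set (Option ℚ)) := by
    ext α
    simp only [Set.mem_setOf_eq, Set.mem_insert_iff, Set.mem_singleton_iff]
    constructor
    · intro h
      cases α with
      | none => tauto
      | some x =>
          by_cases hx0 : x = 0
          · subst hx0; tauto
          · rcases preperiodic_rat x hx0 h with rfl | rfl | rfl | rfl <;> tauto
    · rintro (rfl | rfl | rfl | rfl | rfl | rfl) <;> assumption
  refine ⟨hset, ?_, hvn, hv0, hv1, hvm1, hv3, hvm3⟩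
  rw [hset]
  rw [Set.ncard_insert_of_notMem (by first | (simp; norm_num) | simp),
    Set.ncard_insert_of_notMem (by first | (simp; norm_num) | simp),
    Set.ncard_insert_of_notMem (by first | (simp; norm_num) | simp),
    Set.ncard_insert_of_notMem (by first | (simp; norm_num) | simp),
    Set.ncard_pair (by first | (simp; norm_num) | simp)]
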